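/- Let D be a digraph and suppose its cycle graph C(D) contains an induced cycle of length ℓ ≥ 4. Then D contains a directed cycle of length at least ℓ. -/

import Mathlib

/-- `D.HasDirCycleOfLen n` means that `D` contains a directed cycle of length `n`. -/
def Digraph.HasDirCycleOfLen {V : Type*} (D : Digraph V) (n : ℕ) : Prop :=
  1 ≤ n ∧ ∃ f : ZMod n → V, Function.Injective f ∧ ∀ i, D.Adj (f i) (f (i + 1))

/-- `A` is the arc set of some directed cycle of `D`. We identify a directed cycle of `D`
with its set of arcs (which determines it up to rotation of the cyclic sequence). -/
def Digraph.IsDirCycleSet {V : Type*} (D : Digraph V) (A : Set (V × V)) : Prop :=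
  ∃ n : ℕ, 1 ≤ n ∧ ∃ f : ZMod n → V, Function.Injective f ∧
    (∀ i, D.Adj (f i) (f (i + 1))) ∧ A = Set.range fun i => (f i, f (i + 1))

/-- The set of vertices of a directed cycle, given by its arc set. -/
def cycleVerts {V : Type*} (A : Set (V × V)) : Set V := Prod.fst '' A

/-- The cycle graph `C(D)` of a digraph `D` : its vertices are the directed cycles of
`D`, two of them being adjacent iff they are distinct and share at least one vertex. -/
def Digraph.cycleGraph {V : Type*} (D : Digraph V) :
    SimpleGraph {A : Set (V × V) // D.IsDirCycleSet A} where
  Adj C₁ C₂ := C₁ ≠ C₂ ∧ (cycleVerts C₁.1 ∩ cycleVerts C₂.1).Nonempty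
  symm := ⟨fun C₁ C₂ h => ⟨h.1.symm, by rw [Set.inter_comm]; exact h.2⟩⟩
  loopless := ⟨fun C h => h.1 rfl⟩

/-- `G.HasInducedCycleOfLen ℓ` : the graph `G` contains an induced cycle of length `ℓ`,
i.e. `ℓ` distinct vertices `u_1, …, u_ℓ` such that `u_i` is adjacent to `u_j` iff `i` and
`j` are consecutive modulo `ℓ`. -/
def SimpleGraph.HasInducedCycleOfLen {W : Type*} (G : SimpleGraph W) (ℓ : ℕ) : Prop :=
  ∃ f : ZMod ℓ → W, Function.Injective f ∧
    ∀ i j, G.Adj (f i) (f j) ↔ (j = i + 1 ∨ i = j + 1)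

namespace DirCycleAux

variable {V : Type*}

def arcList {N : ℕ} (g : ZMod N → V) (a : ZMod N) (t : ℕ) : List V :=
  List.map (fun k : ℕ => g (a + (k : ZMod N))) (List.range t)

lemma length_arcList {N : ℕ} (g : ZMod N → V) (a : ZMod N) (t : ℕ) :
    (arcList g a t).length = t := by simp [arcList]

lemma mem_arcList {N : ℕ} {g : ZMod N → V} {a : ZMod N} {t : ℕ} {v : V} :
    v ∈ arcList g a t ↔ ∃ k, k < t ∧ g (a + (k : ZMod N)) = v := by
  simp [arcList]

lemma natCast_inj_of_lt {N x y : ℕ} (hx : x < N) (hy : y < N)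
    (h : (x : ZMod N) = y) : x = y := by
  have h2 := congrArg ZMod.val h
  rwa [ZMod.val_cast_of_lt hx, ZMod.val_cast_of_lt hy] at h2

lemma nodup_arcList {N : ℕ} {g : ZMod N → V} (hg : Function.Injective g)
    (a : ZMod N) {t : ℕ} (ht : t ≤ N) : (arcList g a t).Nodup := by
  refine List.Nodup.map_on ?_ (List.nodup_range (n := t))
  intro x hx y hy hxy
  rw [List.mem_range] at hx hy
  exact natCast_inj_of_lt (lt_of_lt_of_le hx ht) (lt_of_lt_of_le hy ht)
    (add_left_cancel (hg hxy))

lemma chain'_arcList {D : Digraph V} {N : ℕ} {g : ZMod N → V}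
    (hadj : ∀ x, D.Adj (g x) (g (x + 1))) (a : ZMod N) (t : ℕ) :
    (arcList g a t).Chain' D.Adj := by
  unfold List.Chain'
  rw [arcList, List.isChain_map]
  cases t with
  | zero => simp
  | succ t =>
    rw [List.isChain_range_succ]
    intro m _
    have h : ((m + 1 : ℕ) : ZMod N) = (m : ZMod N) + 1 := by push_cast; ring
    rw [Nat.succ_eq_add_one, h, ← add_assoc]
    exact hadj _

lemma head?_arcList {N : ℕ} (g : ZMod N → V) (a : ZMod N) {t : ℕ} (ht : 0 < t) :
    (arcList g a t).head? = some (g a) := by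
  cases t with
  | zero => omega
  | succ t => simp [arcList, List.range_succ_eq_map]

lemma getLast?_arcList {N : ℕ} (g : ZMod N → V) (a : ZMod N) {t : ℕ} (ht : 0 < t) :
    (arcList g a t).getLast? = some (g (a + ((t - 1 : ℕ) : ZMod N))) := by
  cases t with
  | zero => omega
  | succ t =>
    rw [arcList, List.range_succ]
    simp

lemma arcList_ne_nil {N : ℕ} (g : ZMod N → V) (a : ZMod N) {t : ℕ} (ht : 0 < t) :
    arcList g a t ≠ [] := by
  intro h
  have h2 := length_arcList g a t
  rw [h] at h2
  simp at h2
  omega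

lemma hasDirCycleOfLen_of_list (D : Digraph V) (L : List V) (hL : L ≠ [])
    (hnd : L.Nodup) (hch : L.Chain' D.Adj)
    (hcl : D.Adj (L.getLast hL) (L.head hL)) : D.HasDirCycleOfLen L.length := by
  have hlen : 0 < L.length := List.length_pos_iff.mpr hL
  haveI : NeZero L.length := ⟨hlen.ne'⟩
  have key : ∀ p : ℕ, ∀ hp : p < L.length,
      D.Adj (L.get ⟨p, hp⟩) (L.get ⟨(p + 1) % L.length, Nat.mod_lt _ hlen⟩) := by
    intro p hp
    rcases lt_or_ge (p + 1) L.length with h | h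
    · simp only [Nat.mod_eq_of_lt h]
      exact List.isChain_iff_getElem.mp hch p (by omega)
    · have h0 : (p + 1) % L.length = 0 := by
        have he : p + 1 = L.length := by omega
        simp [he]
      have hpe : p = L.length - 1 := by omega
      have hlast : L.getLast hL = L.get ⟨p, hp⟩ := by
        rw [List.getLast_eq_getElem, List.get_eq_getElem]
        congr 1
        exact hpe.symm
      have hhead : L.head hL = L.get ⟨(p + 1) % L.length, Nat.mod_lt _ hlen⟩ := by
        rw [← List.get_mk_zero hlen]
        congr 1
        exact (Fin.mk_eq_mk.mpr h0.symm)
      rw [← hlast, ← hhead]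
      exact hcl
  refine ⟨hlen, fun i => L.get ⟨i.val, ZMod.val_lt i⟩, ?_, ?_⟩
  · intro i j hij
    have h2 := (List.nodup_iff_injective_get.mp hnd) hij
    have h3 : i.val = j.val := by
      simpa using congrArg Fin.val h2
    exact ZMod.val_injective _ h3
  · intro i
    have h1 : ((i.val : ℕ) : ZMod L.length) = i := ZMod.natCast_rightInverse i
    have h2 : (i + 1).val = (i.val + 1) % L.length := by
      conv_lhs => rw [← h1]
      rw [show ((i.val : ℕ) : ZMod L.length) + 1 = ((i.val + 1 : ℕ) : ZMod L.length) by
        push_cast; ring]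
      exact ZMod.val_natCast _ _
    have h3 := key i.val (ZMod.val_lt i)
    simp only [← h2] at h3
    exact h3

theorem main_aux (D : Digraph V) (ℓ : ℕ) (hℓ : 4 ≤ ℓ)
    (n : ZMod ℓ → ℕ) (g : ∀ i, ZMod (n i) → V)
    (hn : ∀ i, 1 ≤ n i)
    (hg : ∀ i, Function.Injective (g i))
    (hadj : ∀ i a, D.Adj (g i a) (g i (a + 1)))
    (hK1 : ∀ i : ZMod ℓ, ∃ v, v ∈ Set.range (g i) ∧ v ∈ Set.range (g (i + 1)))
    (hK2 : ∀ (i : ZMod ℓ) (e : ℕ), 2 ≤ e → e ≤ ℓ - 2 →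
      ∀ v, v ∈ Set.range (g i) → v ∈ Set.range (g (i + (e : ZMod ℓ))) → False) :
    ∃ N : ℕ, ℓ ≤ N ∧ D.HasDirCycleOfLen N := by
  classical
  haveI : NeZero ℓ := ⟨by omega⟩
  have hnz : ∀ i : ZMod ℓ, NeZero (n i) := fun i => ⟨by have := hn i; omega⟩
  have castval : ∀ (i : ZMod ℓ) (x : ZMod (n i)), ((x.val : ℕ) : ZMod (n i)) = x := by
    intro i x
    haveI := hnz i
    exact ZMod.natCast_rightInverse x
  have vallt : ∀ (i : ZMod ℓ) (x : ZMod (n i)), x.val < n i := by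
    intro i x
    haveI := hnz i
    exact ZMod.val_lt x
  -- location of a vertex on a cycle
  set loc : ∀ i : ZMod ℓ, V → ZMod (n i) :=
    fun i v => @Function.invFun _ _ ⟨0⟩ (g i) v with hlocdef
  have hloc : ∀ (i : ZMod ℓ) (v : V), v ∈ Set.range (g i) → g i (loc i v) = v := by
    intro i v hv
    exact @Function.invFun_eq _ _ ⟨0⟩ _ _ hv
  -- greedy step length
  have hex : ∀ (i : ZMod ℓ) (a : ZMod (n i)),
      ∃ k : ℕ, g i (a + (k : ZMod (n i))) ∈ Set.range (g (i + 1)) := by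
    intro i a
    obtain ⟨v, hv1, hv2⟩ := hK1 i
    obtain ⟨p, hp⟩ := hv1
    refine ⟨(p - a).val, ?_⟩
    rw [castval i (p - a), show a + (p - a) = p by ring, hp]
    exact hv2
  set stp : ∀ i : ZMod ℓ, ZMod (n i) → ℕ := fun i a => Nat.find (hex i a) with hstpdef
  have hstpmem : ∀ (i : ZMod ℓ) (a : ZMod (n i)),
      g i (a + (stp i a : ZMod (n i))) ∈ Set.range (g (i + 1)) :=
    fun i a => Nat.find_spec (hex i a)
  have hstpmin : ∀ (i : ZMod ℓ) (a : ZMod (n i)) (k : ℕ), k < stp i a →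
      g i (a + (k : ZMod (n i))) ∉ Set.range (g (i + 1)) :=
    fun i a k hk => Nat.find_min (hex i a) hk
  have hstplt : ∀ (i : ZMod ℓ) (a : ZMod (n i)), stp i a < n i := by
    intro i a
    obtain ⟨v, hv1, hv2⟩ := hK1 i
    obtain ⟨p, hp⟩ := hv1
    have h1 : stp i a ≤ (p - a).val := by
      apply Nat.find_min'
      rw [castval i (p - a), show a + (p - a) = p by ring, hp]
      exact hv2
    have h2 := vallt i (p - a)
    omega
  set nxt : ZMod ℓ → V → V :=
    fun i v => g i (loc i v + (stp i (loc i v) : ZMod (n i))) with hnxtdef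
  have hnxt1 : ∀ (i : ZMod ℓ) (v : V), nxt i v ∈ Set.range (g i) := fun i v => ⟨_, rfl⟩
  have hnxt2 : ∀ (i : ZMod ℓ) (v : V), nxt i v ∈ Set.range (g (i + 1)) :=
    fun i v => hstpmem i (loc i v)
  -- the milestone vertices
  set z : ℕ → V :=
    fun j => Nat.rec (hK1 (0 : ZMod ℓ)).choose (fun j v => nxt ((j + 1 : ℕ) : ZMod ℓ) v) j
    with hzdef
  have hzs : ∀ j : ℕ, z (j + 1) = nxt ((j + 1 : ℕ) : ZMod ℓ) (z j) := fun j => rfl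
  have hzmem1 : ∀ j : ℕ, z j ∈ Set.range (g ((j : ℕ) : ZMod ℓ)) := by
    intro j
    cases j with
    | zero =>
      have h := (hK1 (0 : ZMod ℓ)).choose_spec.1
      have hc : ((0 : ℕ) : ZMod ℓ) = 0 := Nat.cast_zero
      rw [hc]
      exact h
    | succ j => exact hnxt1 _ _
  have hzmem2 : ∀ j : ℕ, z j ∈ Set.range (g (((j + 1 : ℕ) : ZMod ℓ))) := by
    intro j
    cases j with
    | zero =>
      have h := (hK1 (0 : ZMod ℓ)).choose_spec.2
      have hc : ((0 + 1 : ℕ) : ZMod ℓ) = 0 + 1 := by norm_num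
      rw [hc]
      exact h
    | succ j =>
      have h := hnxt2 (((j + 1 : ℕ) : ZMod ℓ)) (z j)
      rw [← hzs j] at h
      have hc : ((j + 1 + 1 : ℕ) : ZMod ℓ) = ((j + 1 : ℕ) : ZMod ℓ) + 1 := by
        push_cast; ring
      rw [hc]
      exact h
  have stppos : ∀ (i : ZMod ℓ) (v : V), v ∈ Set.range (g i) → v ∉ Set.range (g (i + 1)) →
      0 < stp i (loc i v) := by
    intro i v h1 h2
    rcases Nat.eq_zero_or_pos (stp i (loc i v)) with h | h
    · exfalso
      have h3 := hstpmem i (loc i v)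
      rw [h] at h3
      simp only [Nat.cast_zero, add_zero] at h3
      rw [hloc i v h1] at h3
      exact h2 h3
    · exact h
  -- cycle index of segment j
  set c : ℕ → ZMod ℓ := fun j => ((j + 1 : ℕ) : ZMod ℓ) with hcdef
  have hccast : ∀ j : ℕ, c (j + 1) = c j + 1 := by
    intro j
    show ((j + 1 + 1 : ℕ) : ZMod ℓ) = ((j + 1 : ℕ) : ZMod ℓ) + 1
    push_cast; ring
  have hcl0 : c (ℓ - 1) = ((0 : ℕ) : ZMod ℓ) := by
    show ((ℓ - 1 + 1 : ℕ) : ZMod ℓ) = ((0 : ℕ) : ZMod ℓ)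
    rw [show ℓ - 1 + 1 = ℓ by omega]
    simp
  set sa : (j : ℕ) → ZMod (n (c j)) := fun j => loc (c j) (z j) with hsadef
  set sl : ℕ → ℕ := fun j => stp (c j) (sa j) with hsldef
  have hzmc : ∀ j : ℕ, z j ∈ Set.range (g (c j)) := fun j => hzmem2 j
  have hgz : ∀ j : ℕ, g (c j) (sa j) = z j := fun j => hloc _ _ (hzmc j)
  have hnxtz : ∀ j : ℕ, g (c j) (sa j + ((sl j : ℕ) : ZMod (n (c j)))) = z (j + 1) :=
    fun j => (hzs j).symm
  have hminc : ∀ (j k : ℕ), k < sl j →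
      g (c j) (sa j + (k : ZMod (n (c j)))) ∉ Set.range (g (c j + 1)) :=
    fun j k hk => hstpmin _ _ k hk
  have hslpos : ∀ j : ℕ, 0 < sl j := by
    intro j
    refine stppos (c j) (z j) (hzmc j) ?_
    intro h
    refine hK2 ((j : ℕ) : ZMod ℓ) 2 le_rfl (by omega) (z j) (hzmem1 j) ?_
    have hc2 : ((j : ℕ) : ZMod ℓ) + ((2 : ℕ) : ZMod ℓ) = c j + 1 := by
      show ((j : ℕ) : ZMod ℓ) + ((2 : ℕ) : ZMod ℓ) = ((j + 1 : ℕ) : ZMod ℓ) + 1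
      push_cast; ring
    rw [hc2]; exact h
  have hsllt : ∀ j : ℕ, sl j < n (c j) := fun j => hstplt _ _
  -- the re-entry point on the first cycle
  set Q : ℕ → Prop := fun r =>
    g (c 0) (sa 0 + (r : ZMod (n (c 0)))) ∈ Set.range (g (c (ℓ - 1))) with hQdef
  have hQ0 : Q 0 := by
    show g (c 0) (sa 0 + ((0 : ℕ) : ZMod (n (c 0)))) ∈ Set.range (g (c (ℓ - 1)))
    rw [Nat.cast_zero, add_zero, hgz 0, hcl0]
    exact hzmem1 0
  set m : ℕ := Nat.findGreatest Q (sl 0 - 1) with hmdef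
  have hQm : Q m := Nat.findGreatest_spec (Nat.zero_le _) hQ0
  have hmle : m ≤ sl 0 - 1 := Nat.findGreatest_le _
  have hmgr : ∀ r : ℕ, m < r → r ≤ sl 0 - 1 → ¬ Q r :=
    fun r h1 h2 => Nat.findGreatest_is_greatest h1 h2
  have hm_lt : m < sl 0 := by have := hslpos 0; omega
  set w : V := g (c 0) (sa 0 + (m : ZMod (n (c 0)))) with hwdef
  have hw1 : w ∈ Set.range (g (c 0)) := ⟨_, rfl⟩
  have hwlast : w ∈ Set.range (g (c (ℓ - 1))) := hQm
  have hwne : w ≠ z (ℓ - 1) := by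
    intro h
    refine hK2 ((ℓ - 1 : ℕ) : ZMod ℓ) 2 le_rfl (by omega) w ?_ ?_
    · rw [h]; exact hzmem1 (ℓ - 1)
    · have hc2 : ((ℓ - 1 : ℕ) : ZMod ℓ) + ((2 : ℕ) : ZMod ℓ) = c 0 := by
        show ((ℓ - 1 : ℕ) : ZMod ℓ) + ((2 : ℕ) : ZMod ℓ) = ((0 + 1 : ℕ) : ZMod ℓ)
        have h3 : ((ℓ - 1 : ℕ) : ZMod ℓ) + ((2 : ℕ) : ZMod ℓ)
            = ((ℓ - 1 + 2 : ℕ) : ZMod ℓ) := by push_cast; ring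
        rw [h3, show ℓ - 1 + 2 = ℓ + 1 by omega]
        push_cast [ZMod.natCast_self]
        ring
      rw [hc2]; exact hw1
  set d : ℕ := (loc (c (ℓ - 1)) w - sa (ℓ - 1)).val with hddef
  have hdlt : d < n (c (ℓ - 1)) := vallt _ _
  have hwd : loc (c (ℓ - 1)) w = sa (ℓ - 1) + (d : ZMod (n (c (ℓ - 1)))) := by
    rw [hddef, castval (c (ℓ - 1)) (loc (c (ℓ - 1)) w - sa (ℓ - 1))]
    ring
  have hgw : g (c (ℓ - 1)) (sa (ℓ - 1) + (d : ZMod (n (c (ℓ - 1))))) = w := by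
    rw [← hwd]; exact hloc _ _ hwlast
  have hdpos : 0 < d := by
    rcases Nat.eq_zero_or_pos d with h | h
    · exfalso
      have h2 : loc (c (ℓ - 1)) w = sa (ℓ - 1) := by
        rw [hwd, h]; simp
      have h3 : w = z (ℓ - 1) := by
        rw [← hloc _ _ hwlast, h2, hgz (ℓ - 1)]
      exact hwne h3
    · exact h
  -- the segments
  set F : ℕ → List V := fun j =>
    if j = 0 then arcList (g (c 0)) (sa 0 + (m : ZMod (n (c 0)))) (sl 0 - m)
    else if j = ℓ - 1 then arcList (g (c (ℓ - 1))) (sa (ℓ - 1)) d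
    else arcList (g (c j)) (sa j) (sl j) with hFdef
  have hF0 : F 0 = arcList (g (c 0)) (sa 0 + (m : ZMod (n (c 0)))) (sl 0 - m) := by
    simp only [hFdef, if_pos rfl]
  have hFl : F (ℓ - 1) = arcList (g (c (ℓ - 1))) (sa (ℓ - 1)) d := by
    have h0 : ℓ - 1 ≠ 0 := by omega
    simp [hFdef, h0]
  have hFm : ∀ j : ℕ, j ≠ 0 → j ≠ ℓ - 1 → F j = arcList (g (c j)) (sa j) (sl j) := by
    intro j h1 h2
    simp [hFdef, h1, h2]
  have hFlenpos : ∀ j : ℕ, j < ℓ → 0 < (F j).length := by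
    intro j hj
    by_cases h0 : j = 0
    · subst h0; rw [hF0, length_arcList]; omega
    · by_cases h1 : j = ℓ - 1
      · rw [h1, hFl, length_arcList]; exact hdpos
      · rw [hFm j h0 h1, length_arcList]; exact hslpos j
  have hFsub : ∀ j : ℕ, j < ℓ → ∀ v ∈ F j, v ∈ Set.range (g (c j)) := by
    intro j hj v hv
    by_cases h0 : j = 0
    · subst h0; rw [hF0] at hv
      obtain ⟨k, _, hk⟩ := mem_arcList.mp hv
      exact ⟨_, hk⟩
    · by_cases h1 : j = ℓ - 1
      · rw [h1] at hv ⊢; rw [hFl] at hv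
        obtain ⟨k, _, hk⟩ := mem_arcList.mp hv
        exact ⟨_, hk⟩
      · rw [hFm j h0 h1] at hv
        obtain ⟨k, _, hk⟩ := mem_arcList.mp hv
        exact ⟨_, hk⟩
  have hFavoid : ∀ j : ℕ, j < ℓ - 1 → ∀ v ∈ F j, v ∉ Set.range (g (c j + 1)) := by
    intro j hj v hv
    by_cases h0 : j = 0
    · subst h0
      rw [hF0] at hv
      obtain ⟨k, hk1, hk2⟩ := mem_arcList.mp hv
      have hcast : (sa 0 + (m : ZMod (n (c 0)))) + (k : ZMod (n (c 0)))
          = sa 0 + ((m + k : ℕ) : ZMod (n (c 0))) := by push_cast; ring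
      rw [hcast] at hk2
      rw [← hk2]
      exact hminc 0 (m + k) (by omega)
    · have h1 : j ≠ ℓ - 1 := by omega
      rw [hFm j h0 h1] at hv
      obtain ⟨k, hk1, hk2⟩ := mem_arcList.mp hv
      rw [← hk2]
      exact hminc j k hk1
  have hFnd : ∀ j : ℕ, (F j).Nodup := by
    intro j
    by_cases h0 : j = 0
    · subst h0; rw [hF0]
      exact nodup_arcList (hg _) _ (by have := hsllt 0; omega)
    · by_cases h1 : j = ℓ - 1
      · rw [h1, hFl]; exact nodup_arcList (hg _) _ (le_of_lt hdlt)
      · rw [hFm j h0 h1]; exact nodup_arcList (hg _) _ (le_of_lt (hsllt j))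
  have hFch : ∀ j : ℕ, (F j).Chain' D.Adj := by
    intro j
    by_cases h0 : j = 0
    · subst h0; rw [hF0]; exact chain'_arcList (hadj _) _ _
    · by_cases h1 : j = ℓ - 1
      · rw [h1, hFl]; exact chain'_arcList (hadj _) _ _
      · rw [hFm j h0 h1]; exact chain'_arcList (hadj _) _ _
  have hFhead : ∀ j : ℕ, 0 < j → j < ℓ → (F j).head? = some (z j) := by
    intro j hj0 hjl
    by_cases h1 : j = ℓ - 1
    · rw [h1, hFl, head?_arcList _ _ hdpos, hgz]
    · rw [hFm j (by omega) h1, head?_arcList _ _ (hslpos j), hgz]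
  have hFhead0 : (F 0).head? = some w := by
    rw [hF0, hwdef, head?_arcList _ _ (by omega : 0 < sl 0 - m)]
  have hjunc : ∀ j : ℕ, j + 1 < ℓ →
      ∀ x ∈ (F j).getLast?, ∀ y ∈ (F (j + 1)).head?, D.Adj x y := by
    intro j hj x hx y hy
    rw [hFhead (j + 1) (by omega) hj] at hy
    simp only [Option.mem_def, Option.some_inj] at hy
    by_cases h0 : j = 0
    · subst h0
      rw [hF0, getLast?_arcList _ _ (by omega : 0 < sl 0 - m)] at hx
      simp only [Option.mem_def, Option.some_inj] at hx
      have hA := hadj (c 0)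
        ((sa 0 + (m : ZMod (n (c 0)))) + ((sl 0 - m - 1 : ℕ) : ZMod (n (c 0))))
      have hcast : (sa 0 + (m : ZMod (n (c 0)))) + ((sl 0 - m - 1 : ℕ) : ZMod (n (c 0))) + 1
          = sa 0 + ((sl 0 : ℕ) : ZMod (n (c 0))) := by
        obtain ⟨e, he⟩ : ∃ e, sl 0 = m + e + 1 := ⟨sl 0 - m - 1, by omega⟩
        rw [show sl 0 - m - 1 = e from by omega, he]
        push_cast; ring
      rw [hcast, hnxtz 0] at hA
      rw [← hx, ← hy]
      exact hA
    · have h1 : j ≠ ℓ - 1 := by omega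
      rw [hFm j h0 h1, getLast?_arcList _ _ (hslpos j)] at hx
      simp only [Option.mem_def, Option.some_inj] at hx
      have hA := hadj (c j) (sa j + ((sl j - 1 : ℕ) : ZMod (n (c j))))
      have hcast : sa j + ((sl j - 1 : ℕ) : ZMod (n (c j))) + 1
          = sa j + ((sl j : ℕ) : ZMod (n (c j))) := by
        obtain ⟨e, he⟩ : ∃ e, sl j = e + 1 := ⟨sl j - 1, by have := hslpos j; omega⟩
        rw [show sl j - 1 = e from by omega, he]
        push_cast; ring
      rw [hcast, hnxtz j] at hA
      rw [← hx, ← hy]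
      exact hA
  have hFdisj : ∀ i j : ℕ, i < j → j < ℓ → List.Disjoint (F i) (F j) := by
    intro i j hij hjl v hvi hvj
    by_cases hcons : j = i + 1
    · subst hcons
      have h1 := hFavoid i (by omega) v hvi
      have h2 := hFsub (i + 1) hjl v hvj
      rw [hccast i] at h2
      exact h1 h2
    · by_cases hspecial : i = 0 ∧ j = ℓ - 1
      · obtain ⟨hi0, hjl1⟩ := hspecial
        subst hi0
        rw [hF0] at hvi
        obtain ⟨k, hk1, hk2⟩ := mem_arcList.mp hvi
        have hcast : (sa 0 + (m : ZMod (n (c 0)))) + (k : ZMod (n (c 0)))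
            = sa 0 + ((m + k : ℕ) : ZMod (n (c 0))) := by push_cast; ring
        rw [hcast] at hk2
        rcases Nat.eq_zero_or_pos k with hk0 | hk0
        · subst hk0
          rw [hjl1, hFl] at hvj
          obtain ⟨r, hr1, hr2⟩ := mem_arcList.mp hvj
          have hvw : v = w := by
            rw [hwdef, ← hk2]
            norm_num
          have h3 : sa (ℓ - 1) + (r : ZMod (n (c (ℓ - 1))))
              = sa (ℓ - 1) + (d : ZMod (n (c (ℓ - 1)))) := by
            apply hg (c (ℓ - 1))
            rw [hr2, hgw, hvw]
          have h4 := add_left_cancel h3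
          have h5 := natCast_inj_of_lt (lt_trans hr1 hdlt) hdlt h4
          omega
        · have hQmk : Q (m + k) := by
            show g (c 0) (sa 0 + ((m + k : ℕ) : ZMod (n (c 0)))) ∈ Set.range (g (c (ℓ - 1)))
            rw [hk2]
            have h6 := hFsub j hjl v hvj
            rw [hjl1] at h6
            exact h6
          exact hmgr (m + k) (by omega) (by omega) hQmk
      · have h2 : 2 ≤ j - i := by omega
        have h3 : j - i ≤ ℓ - 2 := by
          rcases Nat.eq_zero_or_pos i with h | h
          · have : j ≠ ℓ - 1 := fun hc => hspecial ⟨by omega, hc⟩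
            omega
          · omega
        refine hK2 (c i) (j - i) h2 h3 v (hFsub i (by omega) v hvi) ?_
        have hcast : c i + ((j - i : ℕ) : ZMod ℓ) = c j := by
          show ((i + 1 : ℕ) : ZMod ℓ) + ((j - i : ℕ) : ZMod ℓ) = ((j + 1 : ℕ) : ZMod ℓ)
          rw [← Nat.cast_add, show i + 1 + (j - i) = j + 1 from by omega]
        rw [hcast]
        exact hFsub j hjl v hvj
  -- assembling the list
  set Ls : List (List V) := (List.range ℓ).map F with hLsdef
  have hmemLs : ∀ l ∈ Ls, ∃ j, j < ℓ ∧ F j = l := by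
    intro l hl
    rw [hLsdef] at hl
    obtain ⟨j, hj, hjl⟩ := List.mem_map.mp hl
    exact ⟨j, List.mem_range.mp hj, hjl⟩
  have hnil : [] ∉ Ls := by
    intro h
    obtain ⟨j, hj, hjl⟩ := hmemLs [] h
    have hp := hFlenpos j hj
    rw [hjl] at hp
    simp at hp
  set L : List V := Ls.flatten with hLdef
  have hLlen : ℓ ≤ L.length := by
    rw [hLdef, List.length_flatten]
    have h2 : ∀ x ∈ Ls.map List.length, 1 ≤ x := by
      intro x hx
      obtain ⟨l, hl, hlx⟩ := List.mem_map.mp hx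
      obtain ⟨j, hj, hjl⟩ := hmemLs l hl
      rw [← hlx, ← hjl]
      exact hFlenpos j hj
    have h4 := List.length_le_sum_of_one_le _ h2
    have h5 : (Ls.map List.length).length = ℓ := by simp [hLsdef]
    omega
  have hLne : L ≠ [] := by
    intro h
    have h1 := hLlen
    rw [h] at h1
    simp at h1
    omega
  have hch : L.Chain' D.Adj := by
    unfold List.Chain'
    rw [hLdef, List.isChain_flatten hnil]
    constructor
    · intro l hl
      obtain ⟨j, hj, hjl⟩ := hmemLs l hl
      rw [← hjl]; exact hFch j
    · rw [hLsdef, List.isChain_map]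
      have hiff := List.isChain_range_succ
        (fun a b => ∀ x ∈ (F a).getLast?, ∀ y ∈ (F b).head?, D.Adj x y) (ℓ - 1)
      rw [show (ℓ - 1).succ = ℓ from by omega] at hiff
      rw [hiff]
      intro mm hmm
      exact fun x hx y hy => hjunc mm (by omega) x hx y hy
  have hnd : L.Nodup := by
    rw [hLdef, List.nodup_flatten]
    constructor
    · intro l hl
      obtain ⟨j, hj, hjl⟩ := hmemLs l hl
      rw [← hjl]; exact hFnd j
    · rw [hLsdef, List.pairwise_map]
      refine List.Pairwise.imp_of_mem ?_ (List.pairwise_lt_range (n := ℓ))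
      intro a b _ hb hab
      exact hFdisj a b hab (List.mem_range.mp hb)
  -- head and last of the list
  have hsplit0 : Ls = F 0 :: (List.map (fun x => F (Nat.succ x)) (List.range (ℓ - 1))) := by
    rw [hLsdef]
    conv_lhs => rw [show ℓ = (ℓ - 1) + 1 from by omega, List.range_succ_eq_map]
    rw [List.map_cons, List.map_map]
    rfl
  have hLhead : L.head? = some w := by
    rw [hLdef, hsplit0, List.flatten_cons, List.head?_append, hFhead0]
    rfl
  have hsplitl : Ls = ((List.range (ℓ - 1)).map F) ++ [F (ℓ - 1)] := by
    rw [hLsdef]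
    conv_lhs => rw [show ℓ = (ℓ - 1) + 1 from by omega, List.range_succ]
    rw [List.map_append]
    rfl
  have hFlast : (F (ℓ - 1)).getLast?
      = some (g (c (ℓ - 1)) (sa (ℓ - 1) + ((d - 1 : ℕ) : ZMod (n (c (ℓ - 1)))))) := by
    rw [hFl]
    exact getLast?_arcList _ _ hdpos
  have hLlast : L.getLast?
      = some (g (c (ℓ - 1)) (sa (ℓ - 1) + ((d - 1 : ℕ) : ZMod (n (c (ℓ - 1)))))) := by
    rw [hLdef, hsplitl, List.flatten_append,
      show ([F (ℓ - 1)] : List (List V)).flatten = F (ℓ - 1) from by simp,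
      List.getLast?_append, hFlast]
    rfl
  have hLcl : D.Adj (L.getLast hLne) (L.head hLne) := by
    have h1 : L.getLast hLne
        = g (c (ℓ - 1)) (sa (ℓ - 1) + ((d - 1 : ℕ) : ZMod (n (c (ℓ - 1))))) := by
      have h2 := List.getLast?_eq_getLast hLne
      rw [hLlast] at h2
      exact (Option.some_inj.mp h2).symm
    have h2 : L.head hLne = w := by
      have h3 := List.head?_eq_head (l := L) hLne
      rw [hLhead] at h3
      exact (Option.some_inj.mp h3).symm
    rw [h1, h2]
    have hA := hadj (c (ℓ - 1)) (sa (ℓ - 1) + ((d - 1 : ℕ) : ZMod (n (c (ℓ - 1)))))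
    have hcast : sa (ℓ - 1) + ((d - 1 : ℕ) : ZMod (n (c (ℓ - 1)))) + 1
        = sa (ℓ - 1) + (d : ZMod (n (c (ℓ - 1)))) := by
      obtain ⟨e, he⟩ : ∃ e, d = e + 1 := ⟨d - 1, by omega⟩
      rw [show d - 1 = e from by omega, he]
      push_cast; ring
    rw [hcast, hgw] at hA
    exact hA
  exact ⟨L.length, hLlen, hasDirCycleOfLen_of_list D L hLne hnd hch hLcl⟩

end DirCycleAux

/-- If the cycle graph `C(D)` of a digraph `D` contains an induced cycle of length
`ℓ ≥ 4`, then `D` contains a directed cycle of length at least `ℓ`. -/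
theorem dirCycle_of_inducedCycle_in_cycleGraph {V : Type*} [Fintype V] (D : Digraph V)
    (hirr : ∀ v : V, ¬ D.Adj v v)
    (ℓ : ℕ) (hℓ : 4 ≤ ℓ)
    (hind : D.cycleGraph.HasInducedCycleOfLen ℓ) :
    ∃ n : ℕ, ℓ ≤ n ∧ D.HasDirCycleOfLen n := by
  classical
  haveI : NeZero ℓ := ⟨by omega⟩
  obtain ⟨f, hfinj, hfadj⟩ := hind
  have hdata : ∀ i : ZMod ℓ, ∃ (N : ℕ) (gg : ZMod N → V),
      (1 ≤ N ∧ Function.Injective gg ∧ (∀ a, D.Adj (gg a) (gg (a + 1)))) ∧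
      Set.range gg = cycleVerts (f i).1 := by
    intro i
    obtain ⟨N, hN, gg, h1, h2, h3⟩ := (f i).2
    refine ⟨N, gg, ⟨hN, h1, h2⟩, ?_⟩
    rw [h3]
    simp only [cycleVerts]
    rw [← Set.range_comp]
    rfl
  choose n g hprop hrange using hdata
  have hcast_inj : ∀ x y : ℕ, x < ℓ → y < ℓ → (x : ZMod ℓ) = y → x = y := by
    intro x y hx hy h
    have h2 := congrArg ZMod.val h
    rwa [ZMod.val_cast_of_lt hx, ZMod.val_cast_of_lt hy] at h2
  have hediff : ∀ e : ℕ, 2 ≤ e → e ≤ ℓ - 2 →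
      (e : ZMod ℓ) ≠ 0 ∧ (e : ZMod ℓ) ≠ 1 ∧ (e : ZMod ℓ) + 1 ≠ 0 := by
    intro e h1 h2
    refine ⟨?_, ?_, ?_⟩
    · intro h
      have h3 := (ZMod.natCast_eq_zero_iff e ℓ).mp h
      have h4 := Nat.le_of_dvd (by omega) h3
      omega
    · intro h
      have h3 : e = 1 := hcast_inj e 1 (by omega) (by omega) (by rw [h]; simp)
      omega
    · intro h
      have h3 : ((e + 1 : ℕ) : ZMod ℓ) = 0 := by push_cast; exact h
      have h4 := (ZMod.natCast_eq_zero_iff (e + 1) ℓ).mp h3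
      have h5 := Nat.le_of_dvd (by omega) h4
      omega
  refine DirCycleAux.main_aux D ℓ hℓ n g (fun i => (hprop i).1) (fun i => (hprop i).2.1)
    (fun i => (hprop i).2.2) ?_ ?_
  · intro i
    have hAdj : D.cycleGraph.Adj (f i) (f (i + 1)) := (hfadj i (i + 1)).mpr (Or.inl rfl)
    have h2 : f i ≠ f (i + 1) ∧
        (cycleVerts (f i).1 ∩ cycleVerts (f (i + 1)).1).Nonempty := hAdj
    have h3 := h2.2
    rw [← hrange i, ← hrange (i + 1)] at h3
    obtain ⟨v, hv1, hv2⟩ := h3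
    exact ⟨v, hv1, hv2⟩
  · intro i e he1 he2 v hv1 hv2
    obtain ⟨hne0, hne1, hnem1⟩ := hediff e he1 he2
    have hAdj : D.cycleGraph.Adj (f i) (f (i + (e : ZMod ℓ))) := by
      show f i ≠ f (i + (e : ZMod ℓ)) ∧
        (cycleVerts (f i).1 ∩ cycleVerts (f (i + (e : ZMod ℓ))).1).Nonempty
      constructor
      · intro h
        have h2 := hfinj h
        exact hne0 (left_eq_add.mp h2)
      · refine ⟨v, ?_, ?_⟩
        · rw [← hrange i]; exact hv1
        · rw [← hrange (i + (e : ZMod ℓ))]; exact hv2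
    rw [hfadj] at hAdj
    rcases hAdj with h | h
    · exact hne1 (add_left_cancel h)
    · refine hnem1 ?_
      have h2 : i + ((e : ZMod ℓ) + 1) = i + 0 := by
        rw [add_zero, ← add_assoc, ← h]
      exact add_left_cancel h2
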